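/- Let X ∈ ℝ^{n×p} with rows x₁,…,xₙ ∈ ℝ^p, and let μ>0. Define S := ((1/n)XᵀX + μI_p)⁻¹ and, for each i, S^{∖i} := ((1/n)XᵀX − (1/n)xᵢxᵢᵀ + μI_p)⁻¹ (both matrices are invertible since μ>0). Then (1/n)·tr( ((1/n)XXᵀ + μI_n)⁻¹ ) = (1/n)·Σ_{i=1}^n 1/( μ + (μ/n)·xᵢᵀ S^{∖i} xᵢ ). -/

import Mathlib

open Matrix

private lemma vmv_mulVec {p : ℕ} (v w : Fin p → ℝ) :
    Matrix.vecMulVec v v *ᵥ w = (v ⬝ᵥ w) • v := by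
  funext i
  simp only [Matrix.mulVec, Matrix.vecMulVec_apply, dotProduct, Pi.smul_apply, smul_eq_mul,
    Finset.sum_mul]
  exact Finset.sum_congr rfl fun j _ => by ring

private lemma quadXtX {n p : ℕ} (X : Matrix (Fin n) (Fin p) ℝ) (y : Fin p → ℝ) :
    y ⬝ᵥ ((Xᵀ * X) *ᵥ y) = ∑ j, (X j ⬝ᵥ y) ^ 2 := by
  rw [← Matrix.mulVec_mulVec, Matrix.dotProduct_mulVec, Matrix.vecMul_transpose]
  simp [dotProduct, Matrix.mulVec, sq]

private lemma muOne_posDef {k : ℕ} {μ : ℝ} (hμ : 0 < μ) :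
    (μ • (1 : Matrix (Fin k) (Fin k) ℝ)).PosDef := by
  rw [smul_one_eq_diagonal]
  exact Matrix.PosDef.diagonal fun _ => hμ

private lemma XtX_herm {n p : ℕ} (X : Matrix (Fin n) (Fin p) ℝ) (c : ℝ) :
    (c • (Xᵀ * X)).IsHermitian := by
  simp [Matrix.IsHermitian, conjTranspose_eq_transpose_of_trivial, transpose_smul,
    transpose_mul, transpose_transpose]

private lemma A_posDef {n p : ℕ} (hn : 0 < n) {μ : ℝ} (hμ : 0 < μ)
    (X : Matrix (Fin n) (Fin p) ℝ) :
    (((1:ℝ)/n) • (Xᵀ * X) + μ • (1 : Matrix (Fin p) (Fin p) ℝ)).PosDef := by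
  refine Matrix.PosDef.posSemidef_add (.of_dotProduct_mulVec_nonneg (XtX_herm X _) fun y => ?_) (muOne_posDef hμ)
  rw [star_trivial, Matrix.smul_mulVec, dotProduct_smul, smul_eq_mul, quadXtX]
  positivity

private lemma B_posDef {n p : ℕ} (hn : 0 < n) {μ : ℝ} (hμ : 0 < μ)
    (X : Matrix (Fin n) (Fin p) ℝ) (i : Fin n) :
    (((1:ℝ)/n) • (Xᵀ * X) - ((1:ℝ)/n) • Matrix.vecMulVec (X i) (X i)
      + μ • (1 : Matrix (Fin p) (Fin p) ℝ)).PosDef := by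
  refine Matrix.PosDef.posSemidef_add (.of_dotProduct_mulVec_nonneg ?_ fun y => ?_) (muOne_posDef hμ)
  · have h1 := XtX_herm X ((1:ℝ)/n)
    have h2 : (((1:ℝ)/n) • Matrix.vecMulVec (X i) (X i)).IsHermitian := by
      simp only [Matrix.IsHermitian, conjTranspose_eq_transpose_of_trivial, transpose_smul]
      congr 1
      ext a b
      simp [Matrix.vecMulVec_apply, mul_comm]
    exact h1.sub h2
  · rw [star_trivial, Matrix.sub_mulVec, dotProduct_sub, Matrix.smul_mulVec,
      Matrix.smul_mulVec, dotProduct_smul, dotProduct_smul, smul_eq_mul, smul_eq_mul,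
      quadXtX, vmv_mulVec, dotProduct_smul, smul_eq_mul, sub_nonneg]
    have key : (X i ⬝ᵥ y) * (X i ⬝ᵥ y) ≤ ∑ j, (X j ⬝ᵥ y) ^ 2 := by
      rw [← sq]
      exact Finset.single_le_sum (f := fun j => (X j ⬝ᵥ y) ^ 2)
        (fun j _ => sq_nonneg _) (Finset.mem_univ i)
    have hc : (0:ℝ) ≤ 1/n := by positivity
    calc (1/(n:ℝ)) * (X i ⬝ᵥ y * (y ⬝ᵥ X i)) = (1/n) * ((X i ⬝ᵥ y) * (X i ⬝ᵥ y)) := by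
          rw [dotProduct_comm]
      _ ≤ (1/n) * ∑ j, (X j ⬝ᵥ y) ^ 2 := by
          exact mul_le_mul_of_nonneg_left key hc

theorem stmt12 (n p : ℕ) (hn : 0 < n) (μ : ℝ) (hμ : 0 < μ)
    (X : Matrix (Fin n) (Fin p) ℝ)
    (S : Fin n → Matrix (Fin p) (Fin p) ℝ)
    (hS : ∀ i, S i = (((1:ℝ)/n) • (Xᵀ * X) - ((1:ℝ)/n) • Matrix.vecMulVec (X i) (X i)
      + μ • (1 : Matrix (Fin p) (Fin p) ℝ))⁻¹) :
    (1 / (n:ℝ)) * Matrix.trace ((((1:ℝ)/n) • (X * Xᵀ)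
        + μ • (1 : Matrix (Fin n) (Fin n) ℝ))⁻¹) =
    (1 / (n:ℝ)) * ∑ i, 1 / (μ + (μ / n) * (X i ⬝ᵥ (S i).mulVec (X i))) := by
  have hn' : (0:ℝ) < n := by exact_mod_cast hn
  set A : Matrix (Fin p) (Fin p) ℝ := ((1:ℝ)/n) • (Xᵀ * X) + μ • 1 with hA
  set M : Matrix (Fin n) (Fin n) ℝ := ((1:ℝ)/n) • (X * Xᵀ) + μ • 1 with hM
  have hApd := A_posDef hn hμ X
  have hAinv : A * A⁻¹ = 1 := Matrix.mul_nonsing_inv _ (isUnit_iff_isUnit_det _ |>.1 hApd.isUnit)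
  have hMX : M * X = X * A := by
    rw [hM, hA]
    rw [Matrix.add_mul, Matrix.mul_add, Matrix.smul_mul, Matrix.mul_smul, Matrix.smul_mul,
      Matrix.mul_smul, Matrix.one_mul, Matrix.mul_one, Matrix.mul_assoc]
  have hMinv : M⁻¹ = μ⁻¹ • (1 - ((1:ℝ)/n) • (X * A⁻¹ * Xᵀ)) := by
    apply Matrix.inv_eq_right_inv
    have h1 : M * (X * A⁻¹ * Xᵀ) = X * Xᵀ := by
      rw [← Matrix.mul_assoc, ← Matrix.mul_assoc, hMX, Matrix.mul_assoc X A A⁻¹, hAinv,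
        Matrix.mul_one]
    rw [Matrix.mul_smul, Matrix.mul_sub, Matrix.mul_one, Matrix.mul_smul, h1, hM]
    rw [add_sub_cancel_left, smul_smul, inv_mul_cancel₀ hμ.ne']
    exact one_smul _ _
  rw [hMinv]
  have htr : Matrix.trace (μ⁻¹ • (1 - ((1:ℝ)/n) • (X * A⁻¹ * Xᵀ)))
      = ∑ i, μ⁻¹ * (1 - (1/n) * (X i ⬝ᵥ A⁻¹ *ᵥ X i)) := by
    rw [Matrix.trace]
    refine Finset.sum_congr rfl fun i _ => ?_
    have hentry : (X * A⁻¹ * Xᵀ) i i = X i ⬝ᵥ A⁻¹ *ᵥ X i := by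
      simp only [Matrix.mul_apply, Matrix.transpose_apply, dotProduct, Matrix.mulVec,
        Finset.sum_mul, Finset.mul_sum]
      rw [Finset.sum_comm]
      exact Finset.sum_congr rfl fun a _ => Finset.sum_congr rfl fun b _ => by ring
    simp [Matrix.diag, hentry]
  rw [htr]
  congr 1
  refine Finset.sum_congr rfl fun i _ => ?_
  -- per-index computation
  set B : Matrix (Fin p) (Fin p) ℝ := ((1:ℝ)/n) • (Xᵀ * X)
      - ((1:ℝ)/n) • Matrix.vecMulVec (X i) (X i) + μ • 1 with hB
  have hBpd := B_posDef hn hμ X i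
  have hBunit : IsUnit B.det := isUnit_iff_isUnit_det _ |>.1 hBpd.isUnit
  have hBinv : B * B⁻¹ = 1 := Matrix.mul_nonsing_inv _ hBunit
  set v := X i with hv
  set w : Fin p → ℝ := B⁻¹ *ᵥ v with hw
  set q : ℝ := v ⬝ᵥ w with hq
  have hBw : B *ᵥ w = v := by
    rw [hw, Matrix.mulVec_mulVec, hBinv, Matrix.one_mulVec]
  have hq0 : 0 ≤ q := by
    have := hBpd.posSemidef.dotProduct_mulVec_nonneg w
    rw [star_trivial, hBw] at this
    rwa [hq, dotProduct_comm]
  have hden : (0:ℝ) < 1 + q / n := by positivity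
  have hAB : A = B + ((1:ℝ)/n) • Matrix.vecMulVec v v := by
    rw [hA, hB]; abel
  have hAw : A *ᵥ w = (1 + q / n) • v := by
    rw [hAB, Matrix.add_mulVec, hBw, Matrix.smul_mulVec, vmv_mulVec, ← hq]
    funext j
    simp only [Pi.add_apply, Pi.smul_apply, smul_eq_mul]
    ring
  have hAiv : A⁻¹ *ᵥ v = (1 + q / n)⁻¹ • w := by
    have h2 : A⁻¹ *ᵥ (A *ᵥ w) = w := by
      rw [Matrix.mulVec_mulVec, Matrix.nonsing_inv_mul _ (isUnit_iff_isUnit_det _ |>.1 hApd.isUnit),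
        Matrix.one_mulVec]
    rw [hAw, Matrix.mulVec_smul] at h2
    rw [← h2, smul_smul, inv_mul_cancel₀ hden.ne', one_smul]
  have hval : v ⬝ᵥ A⁻¹ *ᵥ v = (1 + q / n)⁻¹ * q := by
    rw [hAiv, dotProduct_smul, smul_eq_mul, ← hq]
  have hSq : X i ⬝ᵥ (S i).mulVec (X i) = q := by
    rw [hS i, ← hB, ← hv, ← hw, ← hq]
  rw [hval, hSq]
  have hnne : (n:ℝ) ≠ 0 := hn'.ne'
  have h1 : μ + μ / n * q = μ * (1 + q / n) := by ring
  have hprod : (0:ℝ) < μ * (1 + q / n) := by positivity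
  rw [h1, eq_div_iff hprod.ne']
  field_simp
  ring
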